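/- Let X be a compact metric space, f : X → X continuous, and suppose the topological entropy of f is positive and the entropy map is upper semi-continuous and affine. Let Φ : X → ℝ^m be continuous with Rot(Φ) having nonempty interior. Then the localized entropy function H : Rot(Φ) → [0,∞), H(w) = sup{h_μ(f) : rv(μ) = w}, is concave, and H(w) > 0 for every w in the interior of Rot(Φ). -/

import Mathlib

open MeasureTheory Topology Set
open scoped NNReal

/-- The set of `f`-invariant Borel probability measures. -/
def invMeasures {X : Type*} [MeasurableSpace X] (f : X → X) :
    Set (ProbabilityMeasure X) :=
  {μ | (μ : Measure X).map f = (μ : Measure X)}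

/-- Rotation vector of a measure with respect to `Φ = (φ₁, …, φ_m)`. -/
noncomputable def rv {X : Type*} [MeasurableSpace X] {m : ℕ}
    (Φ : Fin m → X → ℝ) (μ : ProbabilityMeasure X) : Fin m → ℝ :=
  fun i => ∫ x, Φ i x ∂(μ : Measure X)

/-- The rotation set of `Φ`. -/
noncomputable def rotSet {X : Type*} [MeasurableSpace X] {m : ℕ}
    (f : X → X) (Φ : Fin m → X → ℝ) : Set (Fin m → ℝ) :=
  rv Φ '' invMeasures f

/-- The rotation class of a rotation vector `w`. -/
noncomputable def rotClass {X : Type*} [MeasurableSpace X] {m : ℕ}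
    (f : X → X) (Φ : Fin m → X → ℝ) (w : Fin m → ℝ) : Set (ProbabilityMeasure X) :=
  {μ ∈ invMeasures f | rv Φ μ = w}

/-- The localized entropy function `H(w) = sup {h(μ) : rv(μ) = w}`. -/
noncomputable def locEntropy {X : Type*} [MeasurableSpace X] {m : ℕ}
    (f : X → X) (Φ : Fin m → X → ℝ) (h : ProbabilityMeasure X → ℝ)
    (w : Fin m → ℝ) : ℝ :=
  sSup (h '' rotClass f Φ w)


section Aux

open BoundedContinuousFunction

variable {X : Type*} [MetricSpace X] [CompactSpace X] [MeasurableSpace X] [BorelSpace X]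

/-- Convex combinations of invariant probability measures: existence and basic
properties of the combined measure. -/
lemma comb_spec (f : X → X) (hf : Continuous f) {m : ℕ}
    (Φ : Fin m → X → ℝ) (hΦ : ∀ i, Continuous (Φ i))
    {μ ν : ProbabilityMeasure X} (hμ : μ ∈ invMeasures f) (hν : ν ∈ invMeasures f)
    (t : ℝ≥0) (ht : t ≤ 1) :
    ∃ ξ : ProbabilityMeasure X,
      (ξ : Measure X) = t • (μ : Measure X) + (1 - t) • (ν : Measure X) ∧
      ξ ∈ invMeasures f ∧
      (∀ g : X →ᵇ ℝ, ∫ x, g x ∂(ξ : Measure X)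
          = (t : ℝ) * ∫ x, g x ∂(μ : Measure X)
            + ((1 : ℝ) - (t : ℝ)) * ∫ x, g x ∂(ν : Measure X)) ∧
      rv Φ ξ = fun i => (t : ℝ) * rv Φ μ i + ((1 : ℝ) - (t : ℝ)) * rv Φ ν i := by
  set M : Measure X := t • (μ : Measure X) + (1 - t) • (ν : Measure X) with hM
  have hMuniv : IsProbabilityMeasure M := by
    constructor
    have h1 : t + (1 - t) = 1 := add_tsub_cancel_of_le ht
    simp only [hM, Measure.coe_add, Pi.add_apply, Measure.smul_apply, measure_univ,
      ENNReal.smul_def, smul_eq_mul, mul_one]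
    rw [← ENNReal.coe_add, h1, ENNReal.coe_one]
  refine ⟨⟨M, hMuniv⟩, rfl, ?_, ?_, ?_⟩
  · show M.map f = M
    rw [hM, Measure.map_add _ _ hf.measurable, Measure.map_smul, Measure.map_smul,
      hμ, hν]
  · intro g
    have hint1 : Integrable g (t • (μ : Measure X)) := g.integrable _
    have hint2 : Integrable g ((1 - t) • (ν : Measure X)) := g.integrable _
    show ∫ x, g x ∂M = _
    rw [hM, integral_add_measure hint1 hint2, integral_smul_nnreal_measure,
      integral_smul_nnreal_measure]
    simp [NNReal.smul_def, smul_eq_mul, NNReal.coe_sub ht]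
  · funext i
    have hg : ∀ g : X →ᵇ ℝ, ∫ x, g x ∂M
        = (t : ℝ) * ∫ x, g x ∂(μ : Measure X)
          + ((1 : ℝ) - (t : ℝ)) * ∫ x, g x ∂(ν : Measure X) := by
      intro g
      have hint1 : Integrable g (t • (μ : Measure X)) := g.integrable _
      have hint2 : Integrable g ((1 - t) • (ν : Measure X)) := g.integrable _
      rw [hM, integral_add_measure hint1 hint2, integral_smul_nnreal_measure,
        integral_smul_nnreal_measure]
      simp [NNReal.smul_def, smul_eq_mul, NNReal.coe_sub ht]
    have := hg (mkOfCompact ⟨Φ i, hΦ i⟩)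
    simpa [rv, mkOfCompact] using this

/-- `h` is bounded above on the set of invariant measures.  This follows from
upper semicontinuity of `h` at a single invariant measure together with
affinity: otherwise, mixing a vanishing amount of measures of entropy blowing up
into `μ₀` would contradict upper semicontinuity at `μ₀`. -/
lemma h_bddAbove (f : X → X) (hf : Continuous f)
    (h : ProbabilityMeasure X → ℝ) (h0 : ∀ μ, 0 ≤ h μ)
    (husc : UpperSemicontinuousOn h (invMeasures f))
    (haff : ∀ μ ∈ invMeasures f, ∀ ν ∈ invMeasures f, ∀ t : ℝ≥0, t ≤ 1 →
      ∀ ξ : ProbabilityMeasure X,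
        (ξ : Measure X) = t • (μ : Measure X) + (1 - t) • (ν : Measure X) →
        h ξ = (t : ℝ) * h μ + ((1 : ℝ) - (t : ℝ)) * h ν)
    {μ₀ : ProbabilityMeasure X} (hμ₀ : μ₀ ∈ invMeasures f) :
    BddAbove (h '' invMeasures f) := by
  by_contra hb
  rw [not_bddAbove_iff] at hb
  have hseq : ∀ n : ℕ, ∃ μ ∈ invMeasures f, (n : ℝ) + 1 < h μ := by
    intro n
    obtain ⟨y, ⟨μ, hμ, rfl⟩, hy⟩ := hb ((n : ℝ) + 1)
    exact ⟨μ, hμ, hy⟩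
  choose μs hμs hhs using hseq
  have hpos : ∀ n : ℕ, (0 : ℝ) < h (μs n) := by
    intro n
    have h1 := hhs n
    have h2 : (0 : ℝ) ≤ (n : ℝ) := Nat.cast_nonneg n
    linarith
  -- the mixing parameters
  set t : ℕ → ℝ≥0 := fun n => Real.toNNReal (1 / h (μs n)) with htdef
  have htc : ∀ n, ((t n : ℝ)) = 1 / h (μs n) := by
    intro n
    exact Real.coe_toNNReal _ (le_of_lt (one_div_pos.mpr (hpos n)))
  have ht1 : ∀ n, t n ≤ 1 := by
    intro n
    rw [← NNReal.coe_le_coe, htc n, NNReal.coe_one]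
    rw [div_le_one (hpos n)]
    have := hhs n
    have : (0 : ℝ) ≤ (n : ℝ) := Nat.cast_nonneg n
    linarith [hhs n]
  have htle : ∀ n, (t n : ℝ) ≤ 1 / ((n : ℝ) + 1) := by
    intro n
    rw [htc n]
    apply one_div_le_one_div_of_le (by positivity)
    linarith [hhs n]
  have ht0 : ∀ n, (0 : ℝ) ≤ (t n : ℝ) := fun n => (t n).coe_nonneg
  have htzero : Filter.Tendsto (fun n => (t n : ℝ)) Filter.atTop (𝓝 0) := by
    apply squeeze_zero ht0 htle
    exact tendsto_one_div_add_atTop_nhds_zero_nat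
  -- the mixed measures
  have hcomb := fun n => comb_spec f hf (fun _ : Fin 0 => (0 : X → ℝ))
    (fun i => continuous_const) (hμs n) hμ₀ (t n) (ht1 n)
  choose ξ hξmeas hξinv hξint _ using hcomb
  have hhξ : ∀ n, h (ξ n) = (t n : ℝ) * h (μs n) + (1 - (t n : ℝ)) * h μ₀ :=
    fun n => haff (μs n) (hμs n) μ₀ hμ₀ (t n) (ht1 n) (ξ n) (hξmeas n)
  have hth : ∀ n, (t n : ℝ) * h (μs n) = 1 := by
    intro n
    rw [htc n, one_div, inv_mul_cancel₀ (ne_of_gt (hpos n))]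
  -- ξ n → μ₀ weakly
  have hξtend : Filter.Tendsto ξ Filter.atTop (𝓝 μ₀) := by
    rw [MeasureTheory.ProbabilityMeasure.tendsto_iff_forall_integral_tendsto]
    intro g
    rw [← tendsto_sub_nhds_zero_iff]
    have key : ∀ n, ∫ x, g x ∂(ξ n : Measure X) - ∫ x, g x ∂(μ₀ : Measure X)
        = (t n : ℝ) * (∫ x, g x ∂(μs n : Measure X) - ∫ x, g x ∂(μ₀ : Measure X)) := by
      intro n
      rw [hξint n g]
      ring
    have hbound : ∀ n, ‖∫ x, g x ∂(ξ n : Measure X) - ∫ x, g x ∂(μ₀ : Measure X)‖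
        ≤ (1 / ((n : ℝ) + 1)) * (2 * ‖g‖) := by
      intro n
      rw [key n, norm_mul]
      have h1 : ‖∫ x, g x ∂(μs n : Measure X)‖ ≤ ‖g‖ := g.norm_integral_le_norm _
      have h2 : ‖∫ x, g x ∂(μ₀ : Measure X)‖ ≤ ‖g‖ := g.norm_integral_le_norm _
      have h3 : ‖∫ x, g x ∂(μs n : Measure X) - ∫ x, g x ∂(μ₀ : Measure X)‖ ≤ 2 * ‖g‖ := by
        calc ‖∫ x, g x ∂(μs n : Measure X) - ∫ x, g x ∂(μ₀ : Measure X)‖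
            ≤ ‖∫ x, g x ∂(μs n : Measure X)‖ + ‖∫ x, g x ∂(μ₀ : Measure X)‖ :=
              norm_sub_le _ _
          _ ≤ 2 * ‖g‖ := by linarith
      have h4 : ‖(t n : ℝ)‖ = (t n : ℝ) := Real.norm_of_nonneg (ht0 n)
      rw [h4]
      apply mul_le_mul (htle n) h3 (norm_nonneg _)
      positivity
    apply squeeze_zero_norm hbound
    have : Filter.Tendsto (fun n : ℕ => (1 / ((n : ℝ) + 1)) * (2 * ‖g‖))
        Filter.atTop (𝓝 (0 * (2 * ‖g‖))) :=
      tendsto_one_div_add_atTop_nhds_zero_nat.mul_const _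
    simpa using this
  -- contradiction with upper semicontinuity at μ₀
  have hξtendW : Filter.Tendsto ξ Filter.atTop (𝓝[invMeasures f] μ₀) :=
    tendsto_nhdsWithin_of_tendsto_nhds_of_eventually_within ξ hξtend
      (Filter.Eventually.of_forall hξinv)
  have husc₀ := husc μ₀ hμ₀ (h μ₀ + 1/2) (by linarith)
  have hev1 : ∀ᶠ n in Filter.atTop, h (ξ n) < h μ₀ + 1/2 := hξtendW.eventually husc₀
  have hev2 : ∀ᶠ n in Filter.atTop, (t n : ℝ) * h μ₀ < 1/2 := by
    have : Filter.Tendsto (fun n => (t n : ℝ) * h μ₀) Filter.atTop (𝓝 (0 * h μ₀)) :=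
      htzero.mul_const _
    rw [zero_mul] at this
    exact this.eventually_lt_const (by norm_num)
  obtain ⟨n, hn1, hn2⟩ := (hev1.and hev2).exists
  have := hhξ n
  have h5 := hth n
  nlinarith [h0 μ₀, ht0 n]

end Aux

/-- If `f` has positive topological entropy (i.e. some invariant measure has
positive entropy) and the entropy map is affine and upper semi-continuous, then
the localized entropy function is concave on `Rot(Φ)` and strictly positive on
its interior. -/
theorem locEntropy_concave_and_pos_on_interior
    {X : Type*} [MetricSpace X] [CompactSpace X] [MeasurableSpace X] [BorelSpace X]
    (f : X → X) (hf : Continuous f) {m : ℕ}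
    (Φ : Fin m → X → ℝ) (hΦ : ∀ i, Continuous (Φ i))
    (h : ProbabilityMeasure X → ℝ) (h0 : ∀ μ, 0 ≤ h μ)
    (husc : UpperSemicontinuousOn h (invMeasures f))
    (haff : ∀ μ ∈ invMeasures f, ∀ ν ∈ invMeasures f, ∀ t : ℝ≥0, t ≤ 1 →
      ∀ ξ : ProbabilityMeasure X,
        (ξ : Measure X) = t • (μ : Measure X) + (1 - t) • (ν : Measure X) →
        h ξ = (t : ℝ) * h μ + ((1 : ℝ) - (t : ℝ)) * h ν)
    (hpos : ∃ μ ∈ invMeasures f, 0 < h μ)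
    (hint : (interior (rotSet f Φ)).Nonempty) :
    ConcaveOn ℝ (rotSet f Φ) (locEntropy f Φ h) ∧
      ∀ w ∈ interior (rotSet f Φ), 0 < locEntropy f Φ h w := by
  obtain ⟨μ₀, hμ₀, hμ₀pos⟩ := hpos
  -- boundedness of h on invariant measures
  have hbdd : BddAbove (h '' invMeasures f) := h_bddAbove f hf h h0 husc haff hμ₀
  have hSbdd : ∀ w, BddAbove (h '' rotClass f Φ w) := by
    intro w
    apply hbdd.mono
    apply image_mono
    intro μ hμ
    exact hμ.1
  have hSne : ∀ w ∈ rotSet f Φ, (h '' rotClass f Φ w).Nonempty := by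
    rintro w ⟨μ, hμ, rfl⟩
    exact ⟨h μ, μ, ⟨hμ, rfl⟩, rfl⟩
  -- the key combination inequality
  have key : ∀ w₁ ∈ rotSet f Φ, ∀ w₂ ∈ rotSet f Φ, ∀ a b : ℝ, 0 ≤ a → 0 ≤ b →
      a + b = 1 → ∀ μ ∈ rotClass f Φ w₁, ∀ ν ∈ rotClass f Φ w₂,
      a * h μ + b * h ν ≤ locEntropy f Φ h (a • w₁ + b • w₂) := by
    intro w₁ hw₁ w₂ hw₂ a b ha hb hab μ hμ ν hν
    set ta : ℝ≥0 := Real.toNNReal a with htadef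
    have htac : (ta : ℝ) = a := Real.coe_toNNReal a ha
    have hta1 : ta ≤ 1 := by
      rw [← NNReal.coe_le_coe, htac, NNReal.coe_one]; linarith
    obtain ⟨ξ, hξmeas, hξinv, hξint, hξrv⟩ :=
      comb_spec f hf Φ hΦ hμ.1 hν.1 ta hta1
    have hba : (1 : ℝ) - a = b := by linarith
    have hhξ : h ξ = a * h μ + b * h ν := by
      rw [haff μ hμ.1 ν hν.1 ta hta1 ξ hξmeas, htac, hba]
    have hrv : rv Φ ξ = a • w₁ + b • w₂ := by
      rw [hξrv, hμ.2, hν.2]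
      funext i
      simp [htac, hba, mul_comm]
    have hmem : ξ ∈ rotClass f Φ (a • w₁ + b • w₂) := ⟨hξinv, hrv⟩
    rw [← hhξ]
    exact le_csSup (hSbdd _) (mem_image_of_mem h hmem)
  -- convexity of the rotation set
  have hconv : Convex ℝ (rotSet f Φ) := by
    intro w₁ hw₁ w₂ hw₂ a b ha hb hab
    obtain ⟨μ, hμ, hμrv⟩ := hw₁
    obtain ⟨ν, hν, hνrv⟩ := hw₂
    set ta : ℝ≥0 := Real.toNNReal a with htadef
    have htac : (ta : ℝ) = a := Real.coe_toNNReal a ha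
    have hta1 : ta ≤ 1 := by
      rw [← NNReal.coe_le_coe, htac, NNReal.coe_one]; linarith
    obtain ⟨ξ, hξmeas, hξinv, hξint, hξrv⟩ :=
      comb_spec f hf Φ hΦ hμ hν ta hta1
    refine ⟨ξ, hξinv, ?_⟩
    rw [hξrv, hμrv, hνrv]
    funext i
    have hba : (1 : ℝ) - a = b := by linarith
    simp [htac, hba, mul_comm]
  -- concavity
  have hconc : ConcaveOn ℝ (rotSet f Φ) (locEntropy f Φ h) := by
    refine ⟨hconv, ?_⟩
    intro w₁ hw₁ w₂ hw₂ a b ha hb hab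
    rcases eq_or_lt_of_le ha with ha0 | ha0
    · have hb1 : b = 1 := by linarith
      subst hb1
      rw [← ha0]
      simp
    rcases eq_or_lt_of_le hb with hb0 | hb0
    · have ha1 : a = 1 := by linarith
      subst ha1
      rw [← hb0]
      simp
    set c := locEntropy f Φ h (a • w₁ + b • w₂) with hc
    have hS1ne := hSne w₁ hw₁
    have hS2ne := hSne w₂ hw₂
    have step1 : ∀ x ∈ h '' rotClass f Φ w₁, a * x + b * sSup (h '' rotClass f Φ w₂) ≤ c := by
      intro x hx
      obtain ⟨μ, hμ, rfl⟩ := hx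
      have : sSup (h '' rotClass f Φ w₂) ≤ (c - a * h μ) / b := by
        apply csSup_le hS2ne
        rintro y ⟨ν, hν, rfl⟩
        rw [le_div_iff₀ hb0]
        have := key w₁ hw₁ w₂ hw₂ a b ha hb hab μ hμ ν hν
        linarith
      have h2 : b * sSup (h '' rotClass f Φ w₂) ≤ c - a * h μ := by
        rw [mul_comm]
        exact (le_div_iff₀ hb0).mp this
      linarith
    have step2 : sSup (h '' rotClass f Φ w₁)
        ≤ (c - b * sSup (h '' rotClass f Φ w₂)) / a := by
      apply csSup_le hS1ne
      intro x hx
      rw [le_div_iff₀ ha0]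
      have := step1 x hx
      linarith
    have step3 : a * sSup (h '' rotClass f Φ w₁) ≤ c - b * sSup (h '' rotClass f Φ w₂) := by
      rw [mul_comm]
      exact (le_div_iff₀ ha0).mp step2
    show a • locEntropy f Φ h w₁ + b • locEntropy f Φ h w₂ ≤ c
    simp only [smul_eq_mul]
    show a * sSup (h '' rotClass f Φ w₁) + b * sSup (h '' rotClass f Φ w₂) ≤ c
    linarith
  refine ⟨hconc, ?_⟩
  -- positivity on the interior
  intro w hw
  set w₀ : Fin m → ℝ := rv Φ μ₀ with hw₀def
  have hw₀ : w₀ ∈ rotSet f Φ := ⟨μ₀, hμ₀, rfl⟩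
  -- find t ∈ (0,1) with the "stretched" point in the rotation set
  set g : ℝ → (Fin m → ℝ) := fun t => (1 - t)⁻¹ • (w - t • w₀) with hgdef
  have hg0 : g 0 = w := by simp [hgdef]
  have hgc : ContinuousAt g 0 := by
    apply ContinuousAt.smul (f := fun t : ℝ => (1 - t)⁻¹) (g := fun t => w - t • w₀)
    · exact ContinuousAt.inv₀ (by fun_prop) (by norm_num)
    · fun_prop
  have hmemnhds : interior (rotSet f Φ) ∈ 𝓝 (g 0) := by
    rw [hg0]
    exact isOpen_interior.mem_nhds hw
  have hev : ∀ᶠ t in 𝓝 (0 : ℝ), g t ∈ rotSet f Φ :=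
    (hgc.eventually_mem hmemnhds).mono (fun t ht => interior_subset ht)
  have hev' : ∀ᶠ t in 𝓝[>] (0 : ℝ), g t ∈ rotSet f Φ :=
    hev.filter_mono nhdsWithin_le_nhds
  have hIoo : Ioo (0 : ℝ) 1 ∈ 𝓝[>] (0 : ℝ) :=
    Ioo_mem_nhdsGT_of_mem ⟨le_refl _, zero_lt_one⟩
  obtain ⟨t, hgt, ht0, ht1⟩ := (hev'.and hIoo).exists
  have ht1' : (1 : ℝ) - t ≠ 0 := by linarith
  -- w is a strict convex combination of w₀ and g t
  have hwcomb : w = t • w₀ + (1 - t) • g t := by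
    rw [hgdef]
    simp only
    rw [smul_smul, mul_inv_cancel₀ ht1', one_smul]
    abel
  obtain ⟨ν, hν, hνrv⟩ := hgt
  set tt : ℝ≥0 := Real.toNNReal t with httdef
  have httc : (tt : ℝ) = t := Real.coe_toNNReal t (le_of_lt ht0)
  have htt1 : tt ≤ 1 := by
    rw [← NNReal.coe_le_coe, httc, NNReal.coe_one]; linarith
  obtain ⟨ξ, hξmeas, hξinv, hξint, hξrv⟩ :=
    comb_spec f hf Φ hΦ hμ₀ hν tt htt1
  have hrvξ : rv Φ ξ = w := by
    rw [hξrv, hνrv, hwcomb]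
    funext i
    simp [httc, mul_comm, hw₀def]
  have hhξ : h ξ = t * h μ₀ + (1 - t) * h ν := by
    rw [haff μ₀ hμ₀ ν hν tt htt1 ξ hξmeas, httc]
  have hξpos : 0 < h ξ := by
    rw [hhξ]
    have := h0 ν
    nlinarith
  have hmem : ξ ∈ rotClass f Φ w := ⟨hξinv, hrvξ⟩
  calc (0 : ℝ) < h ξ := hξpos
    _ ≤ locEntropy f Φ h w := le_csSup (hSbdd w) (mem_image_of_mem h hmem)
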